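/- In a real inner product space, for any nonzero vectors x and y, the angular distance satisfies α[x,y] ≤ 2‖x−y‖/(‖x‖+‖y‖). -/

import Mathlib

open scoped RealInnerProductSpace


theorem stmt_19 {X : Type*} [NormedAddCommGroup X] [InnerProductSpace ℝ X]
    (x y : X) (hx : x ≠ 0) (hy : y ≠ 0) :
    ‖(1 / ‖x‖) • x - (1 / ‖y‖) • y‖ ≤ 2 * ‖x - y‖ / (‖x‖ + ‖y‖) := by
  have ha : (0:ℝ) < ‖x‖ := norm_pos_iff.mpr hx
  have hb : (0:ℝ) < ‖y‖ := norm_pos_iff.mpr hy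
  set a := ‖x‖
  set b := ‖y‖
  rw [le_div_iff₀ (by positivity)]
  have key : (‖(1 / a) • x - (1 / b) • y‖ * (a + b))^2 ≤ (2 * ‖x - y‖)^2 := by
    have h1 : ‖(1 / a) • x - (1 / b) • y‖^2 =
        ‖(1/a) • x‖^2 - 2 * (inner ℝ ((1/a) • x) ((1/b) • y) : ℝ) + ‖(1/b) • y‖^2 :=
      norm_sub_sq_real _ _
    have h2 : ‖x - y‖^2 = a^2 - 2 * (inner ℝ (x) (y) : ℝ) + b^2 := by
      rw [norm_sub_sq_real]
    have hcs : -(inner ℝ (x) (y) : ℝ) ≤ a * b := by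
      have := abs_real_inner_le_norm x y
      cases abs_le.mp this with
      | intro h _ => linarith
    have h3 : ‖(1/a) • x‖ = 1 := by
      rw [norm_smul, Real.norm_eq_abs, abs_of_pos (by positivity : (0:ℝ) < 1/a)]
      field_simp; rfl
    have h4 : ‖(1/b) • y‖ = 1 := by
      rw [norm_smul, Real.norm_eq_abs, abs_of_pos (by positivity : (0:ℝ) < 1/b)]
      field_simp; rfl
    have h5 : (inner ℝ ((1/a) • x) ((1/b) • y) : ℝ) = (1/a) * ((1/b) * (inner ℝ (x) (y) : ℝ)) := by
      rw [real_inner_smul_left, real_inner_smul_right]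
    have h6 : ‖(1 / a) • x - (1 / b) • y‖^2 = 2 - 2 * (inner ℝ (x) (y) : ℝ) / (a*b) := by
      rw [h1, h3, h4, h5]; field_simp; ring
    have hab : 0 < a * b := by positivity
    have h7 : ‖(1 / a) • x - (1 / b) • y‖^2 * (a*b) = 2*(a*b) - 2*(inner ℝ x y : ℝ) := by
      rw [h6]; field_simp
    have h8 : ‖(1 / a) • x - (1 / b) • y‖^2 * (a*b) * (a+b)^2
        = (2*(a*b) - 2*(inner ℝ x y : ℝ)) * (a+b)^2 := by
      linear_combination (a+b)^2 * h7
    have key2 : (‖(1 / a) • x - (1 / b) • y‖ * (a + b))^2 * (a*b) ≤ (2 * ‖x - y‖)^2 * (a*b) := by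
      nlinarith [mul_le_mul_of_nonneg_left hcs (sq_nonneg (a-b)), h2, h8]
    exact le_of_mul_le_mul_right key2 hab
  have hn1 : 0 ≤ ‖(1 / a) • x - (1 / b) • y‖ * (a + b) := by positivity
  have hn2 : 0 ≤ 2 * ‖x - y‖ := by positivity
  nlinarith [key]
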